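/- Let G be a finite group generated by an involution x and an element y of order 3, with G not isomorphic to ℤ/6 and not isomorphic to ℤ₃ wr ℤ₂ ≅ (ℤ₃ × ℤ₃) ⋊ ℤ₂. Let S = {x, y, y^x} and Γ = Cay(G,S). Then Γ has Cayley index exactly 2. -/

import Mathlib

/-- The automorphism group of a digraph given by an adjacency relation. -/
def dAut {V : Type*} (adj : V → V → Prop) : Subgroup (Equiv.Perm V) where
  carrier := {σ | ∀ u v : V, adj (σ u) (σ v) ↔ adj u v}
  one_mem' := by intro u v; rfl
  mul_mem' := by
    intro a b ha hb u v
    simp only [Set.mem_setOf_eq] at *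
    rw [Equiv.Perm.mul_apply, Equiv.Perm.mul_apply, ha, hb]
  inv_mem' := by
    intro a ha u v
    simpa using (ha (a⁻¹ u) (a⁻¹ v)).symm

/-- Adjacency of the Cayley digraph `Cay(G,S)`. -/
def cayAdj (G : Type*) [Group G] (S : Set G) : G → G → Prop :=
  fun u v => v * u⁻¹ ∈ S

/-- The right regular representation of `G` in `Equiv.Perm G`. -/
def rightReg (G : Type*) [Group G] : G →* Equiv.Perm G where
  toFun g := Equiv.mulRight g⁻¹
  map_one' := by ext x; simp
  map_mul' := by intro a b; ext x; simp [mul_assoc]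

/-- The right regular representation of `G` as a subgroup of `Aut(Cay(G,S))`. -/
def cayleyRR (G : Type*) [Group G] (S : Set G) :
    Subgroup (dAut (cayAdj G S)) :=
  ((rightReg G).range).subgroupOf (dAut (cayAdj G S))

/-- A subgroup of `Equiv.Perm V` is regular if it is sharply transitive on `V`. -/
def IsRegularSub {V : Type*} (H : Subgroup (Equiv.Perm V)) : Prop :=
  ∀ v w : V, ∃! h : H, (h : Equiv.Perm V) v = w

/-- Adjacency of the cartesian product of two digraphs. -/
def cartAdj {α β : Type*} (adjG : α → α → Prop) (adjD : β → β → Prop) :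
    α × β → α × β → Prop :=
  fun u v => (u.1 = v.1 ∧ adjD u.2 v.2) ∨ (u.2 = v.2 ∧ adjG u.1 v.1)

/-- `pathLe adj i u v` : there is a directed path of length at most `i` from `u` to `v`. -/
def pathLe {V : Type*} (adj : V → V → Prop) : ℕ → V → V → Prop
  | 0, u, v => u = v
  | (n+1), u, v => pathLe adj n u v ∨ ∃ w, pathLe adj n u w ∧ adj w v

/-- The coordinate-swap automorphism of `Z₃ × Z₃`. -/
def swapAut : MulAut (Multiplicative (ZMod 3) × Multiplicative (ZMod 3)) :=
  MulEquiv.prodComm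

/-- The action of `Z₂` on `Z₃ × Z₃` by swapping coordinates. -/
def swapAction :
    Multiplicative (ZMod 2) →*
      MulAut (Multiplicative (ZMod 3) × Multiplicative (ZMod 3)) :=
  AddMonoidHom.toMultiplicativeLeft
    (ZMod.lift 2 ⟨zmultiplesHom _ (Additive.ofMul swapAut), by
      have h : swapAut * swapAut = 1 := by ext z <;> rfl
      simp only [zmultiplesHom_apply]
      rw [show ((2 : ℕ) : ℤ) = (1 : ℤ) + 1 by norm_num, add_zsmul, one_zsmul,
        ← ofMul_mul, h, ofMul_one]⟩)

/-- The wreath product `Z₃ ≀ Z₂ ≅ (Z₃ × Z₃) ⋊ Z₂`. -/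
abbrev Z3wrZ2 : Type :=
  (Multiplicative (ZMod 3) × Multiplicative (ZMod 3)) ⋊[swapAction]
    Multiplicative (ZMod 2)


section St16Aux

variable {G : Type*} [Group G]

lemma st16_mem_dAut {V : Type*} {adj : V → V → Prop} {σ : Equiv.Perm V} :
    σ ∈ dAut adj ↔ ∀ u v, adj (σ u) (σ v) ↔ adj u v := Iff.rfl

lemma st16_adj_iff (x a b u v : G) :
    cayAdj G {x, a, b} u v ↔ v = x * u ∨ v = a * u ∨ v = b * u := by
  simp [cayAdj, Set.mem_insert_iff, mul_inv_eq_iff_eq_mul]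

/-- Main case rigidity: if `b := xax ∉ {a, a²}` and `σ` is a digraph automorphism
fixing `1` and `a`, then `σ = id`. -/
lemma st16_fix_main (x a : G)
    (hxx : x * x = 1) (hx1 : x ≠ 1) (ha3 : a * (a * a) = 1) (ha1 : a ≠ 1)
    (hb1 : x * a * x ≠ a) (hb2 : x * a * x ≠ a * a)
    (hgen : ∀ g : G, g ∈ Submonoid.closure ({x, a, x * a * x} : Set G))
    (σ : Equiv.Perm G)
    (hσ : ∀ u v, cayAdj G {x, a, x * a * x} (σ u) (σ v) ↔ cayAdj G {x, a, x * a * x} u v)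
    (h1 : σ 1 = 1) (hfa : σ a = a) : ∀ g, σ g = g := by
  set b := x * a * x with hbdef
  have hX : ∀ u : G, x * (x * u) = u := fun u => by rw [← mul_assoc, hxx, one_mul]
  have hA : ∀ u : G, a * (a * (a * u)) = u := fun u => by
    rw [← mul_assoc, ← mul_assoc, mul_assoc a a a, ha3, one_mul]
  have hxinv : x⁻¹ = x := inv_eq_of_mul_eq_one_right hxx
  have hainv : a⁻¹ = a * a := inv_eq_of_mul_eq_one_right ha3
  have hax : a ≠ x := by
    intro h
    apply hx1
    have h3 := ha3
    rw [h, ← mul_assoc, hxx, one_mul] at h3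
    exact h3
  have hb3 : b * (b * b) = 1 := by
    rw [hbdef]
    simp only [mul_assoc, hX, hxx, mul_one]
    simp only [← mul_assoc, mul_assoc a a a, ha3, one_mul, hxx]
  have hbinv : b⁻¹ = b * b := inv_eq_of_mul_eq_one_right hb3
  have hB : ∀ u : G, b * (b * (b * u)) = u := fun u => by
    rw [← mul_assoc, ← mul_assoc, mul_assoc b b b, hb3, one_mul]
  have hbne1 : b ≠ 1 := by
    intro h
    apply ha1
    have h2 : x * a = x := by
      have h3 := mul_eq_one_iff_eq_inv.mp h
      rwa [hxinv] at h3
    have := mul_left_cancel (a := x) (b := a) (c := 1) (by rw [h2, mul_one])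
    exact this
  have hbnex : b ≠ x := by
    intro h
    have h2 : x * a = 1 := by
      have h3 : x * a * x * x = x * x := by rw [← hbdef, h]
      rwa [mul_assoc (x*a) x x, hxx, mul_one] at h3
    have h4 := mul_eq_one_iff_inv_eq.mp h2
    rw [hxinv] at h4
    exact hax h4.symm
  have haanex : a * a ≠ x := fun h => hax (by rw [← inv_inv a, hainv, h, hxinv])
  have haanea : a * a ≠ a := fun h => ha1 (mul_right_cancel (b := a) (by rw [h, one_mul]))
  have hbbnex : b * b ≠ x := fun h => hbnex (by rw [← inv_inv b, hbinv, h, hxinv])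
  have hbbneb : b * b ≠ b := fun h => hbne1 (mul_right_cancel (b := b) (by rw [h, one_mul]))
  have hbbnea : b * b ≠ a := by
    intro h
    apply hb2
    show b = a * a
    have h2 : b⁻¹ = a := by rw [hbinv, h]
    rw [← hainv, ← h2, inv_inv]
  have haneb : a ≠ b := fun h => hb1 h.symm
  have hxb : x * b = a * x := by rw [hbdef, ← mul_assoc, ← mul_assoc, hxx, one_mul]
  have hbx : b * x = x * a := by rw [hbdef, mul_assoc, hxx, mul_one]
  have adj_iff : ∀ u v : G, cayAdj G {x, a, b} u v ↔ v = x * u ∨ v = a * u ∨ v = b * u :=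
    fun u v => st16_adj_iff x a b u v
  -- no returning arc along a or b
  have nadj_a : ∀ u : G, ¬ cayAdj G {x, a, b} (a * u) u := by
    intro u h
    rcases (adj_iff _ _).mp h with h' | h' | h'
    · rw [← mul_assoc] at h'
      have h2 : x * a = 1 := right_eq_mul.mp h'
      have h3 := mul_eq_one_iff_inv_eq.mp h2
      rw [hxinv] at h3
      exact hax h3.symm
    · rw [← mul_assoc] at h'
      have h2 : a * a = 1 := right_eq_mul.mp h'
      apply ha1
      have h3 := ha3
      rw [h2, mul_one] at h3
      exact h3
    · rw [← mul_assoc] at h'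
      have h2 : b * a = 1 := right_eq_mul.mp h'
      have h3 := mul_eq_one_iff_inv_eq.mp h2
      rw [hbinv] at h3
      exact hbbnea h3
  have nadj_b : ∀ u : G, ¬ cayAdj G {x, a, b} (b * u) u := by
    intro u h
    rcases (adj_iff _ _).mp h with h' | h' | h'
    · rw [← mul_assoc] at h'
      have h2 : x * b = 1 := right_eq_mul.mp h'
      rw [hxb] at h2
      have h3 := mul_eq_one_iff_inv_eq.mp h2
      rw [hainv] at h3
      exact haanex h3
    · rw [← mul_assoc] at h'
      have h2 : a * b = 1 := right_eq_mul.mp h'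
      have h3 := mul_eq_one_iff_inv_eq.mp h2
      rw [hainv] at h3
      exact hb2 h3.symm
    · rw [← mul_assoc] at h'
      have h2 : b * b = 1 := right_eq_mul.mp h'
      apply hbne1
      have h3 := hb3
      rw [h2, mul_one] at h3
      exact h3
  have adj_x : ∀ u : G, cayAdj G {x, a, b} u (x * u) := fun u => (adj_iff _ _).mpr (Or.inl rfl)
  have adj_x' : ∀ u : G, cayAdj G {x, a, b} (x * u) u :=
    fun u => (adj_iff _ _).mpr (Or.inl (hX u).symm)
  have adj_a : ∀ u : G, cayAdj G {x, a, b} u (a * u) :=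
    fun u => (adj_iff _ _).mpr (Or.inr (Or.inl rfl))
  have adj_b : ∀ u : G, cayAdj G {x, a, b} u (b * u) :=
    fun u => (adj_iff _ _).mpr (Or.inr (Or.inr rfl))
  have bi_eq : ∀ u v : G, cayAdj G {x, a, b} u v → cayAdj G {x, a, b} v u → v = x * u := by
    intro u v h h'
    rcases (adj_iff u v).mp h with h2 | h2 | h2
    · exact h2
    · exact absurd (h2 ▸ h') (nadj_a u)
    · exact absurd (h2 ▸ h') (nadj_b u)
  have single_eq : ∀ u v : G, cayAdj G {x, a, b} u v → ¬ cayAdj G {x, a, b} v u →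
      v = a * u ∨ v = b * u := by
    intro u v h hn
    rcases (adj_iff u v).mp h with h2 | h2 | h2
    · exact absurd (h2 ▸ adj_x' u) hn
    · exact Or.inl h2
    · exact Or.inr h2
  have single_eq' : ∀ u v : G, cayAdj G {x, a, b} v u → ¬ cayAdj G {x, a, b} u v →
      v = a * (a * u) ∨ v = b * (b * u) := by
    intro u v h hn
    rcases single_eq v u h hn with h2 | h2
    · left; rw [h2]; exact (hA v).symm
    · right; rw [h2]; exact (hB v).symm
  have hpres : ∀ u v : G, cayAdj G {x, a, b} u v → cayAdj G {x, a, b} (σ u) (σ v) :=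
    fun u v h => (hσ u v).mpr h
  have hpres' : ∀ u v : G, ¬ cayAdj G {x, a, b} u v → ¬ cayAdj G {x, a, b} (σ u) (σ v) :=
    fun u v hn h => hn ((hσ u v).mp h)
  have hglob : ∀ v : G, σ (x * v) = x * σ v :=
    fun v => bi_eq (σ v) (σ (x * v)) (hpres _ _ (adj_x v)) (hpres _ _ (adj_x' v))
  set P : G → Prop := fun v => σ (a * v) = a * σ v ∧ σ (b * v) = b * σ v with hPdef
  have prop_a : ∀ v : G, P v → P (a * v) := by
    intro v hP
    have e1 : σ (a * (a * v)) = a * (a * σ v) ∨ σ (a * (a * v)) = b * (a * σ v) := by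
      have h := single_eq (σ (a * v)) (σ (a * (a * v)))
        (hpres _ _ (adj_a (a * v))) (hpres' _ _ (nadj_a (a * v)))
      rwa [hP.1] at h
    have hin : cayAdj G {x, a, b} (a * (a * v)) v :=
      (adj_iff _ _).mpr (Or.inr (Or.inl (hA v).symm))
    have hnin : ¬ cayAdj G {x, a, b} v (a * (a * v)) := by
      intro h
      rcases (adj_iff _ _).mp h with h2 | h2 | h2
      · rw [← mul_assoc] at h2; exact haanex (mul_right_cancel h2)
      · rw [← mul_assoc] at h2; exact haanea (mul_right_cancel h2)
      · rw [← mul_assoc] at h2; exact hb2 (mul_right_cancel h2).symm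
    have e2 : σ (a * (a * v)) = a * (a * σ v) ∨ σ (a * (a * v)) = b * (b * σ v) :=
      single_eq' (σ v) (σ (a * (a * v))) (hpres _ _ hin) (hpres' _ _ hnin)
    have key1 : σ (a * (a * v)) = a * (a * σ v) := by
      rcases e1 with h | h
      · exact h
      · rcases e2 with h' | h'
        · exact h'
        · exfalso
          rw [h] at h'
          exact haneb (mul_right_cancel (mul_left_cancel h'))
    have key2 : σ (b * (a * v)) = b * (a * σ v) := by
      have h := single_eq (σ (a * v)) (σ (b * (a * v)))
        (hpres _ _ (adj_b (a * v))) (hpres' _ _ (nadj_b (a * v)))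
      rw [hP.1] at h
      rcases h with h | h
      · exfalso
        have h3 := σ.injective (h.trans key1.symm)
        exact haneb (mul_right_cancel h3).symm
      · exact h
    exact ⟨by rw [hP.1]; exact key1, by rw [hP.1]; exact key2⟩
  have prop_b : ∀ v : G, P v → P (b * v) := by
    intro v hP
    have e1 : σ (b * (b * v)) = a * (b * σ v) ∨ σ (b * (b * v)) = b * (b * σ v) := by
      have h := single_eq (σ (b * v)) (σ (b * (b * v)))
        (hpres _ _ (adj_b (b * v))) (hpres' _ _ (nadj_b (b * v)))
      rwa [hP.2] at h
    have hin : cayAdj G {x, a, b} (b * (b * v)) v :=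
      (adj_iff _ _).mpr (Or.inr (Or.inr (hB v).symm))
    have hnin : ¬ cayAdj G {x, a, b} v (b * (b * v)) := by
      intro h
      rcases (adj_iff _ _).mp h with h2 | h2 | h2
      · rw [← mul_assoc] at h2; exact hbbnex (mul_right_cancel h2)
      · rw [← mul_assoc] at h2; exact hbbnea (mul_right_cancel h2)
      · rw [← mul_assoc] at h2; exact hbbneb (mul_right_cancel h2)
    have e2 : σ (b * (b * v)) = a * (a * σ v) ∨ σ (b * (b * v)) = b * (b * σ v) :=
      single_eq' (σ v) (σ (b * (b * v))) (hpres _ _ hin) (hpres' _ _ hnin)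
    have key1 : σ (b * (b * v)) = b * (b * σ v) := by
      rcases e1 with h | h
      · rcases e2 with h' | h'
        · exfalso
          rw [h] at h'
          exact haneb (mul_right_cancel (mul_left_cancel h')).symm
        · exact h'
      · exact h
    have key2 : σ (a * (b * v)) = a * (b * σ v) := by
      have h := single_eq (σ (b * v)) (σ (a * (b * v)))
        (hpres _ _ (adj_a (b * v))) (hpres' _ _ (nadj_a (b * v)))
      rw [hP.2] at h
      rcases h with h | h
      · exact h
      · exfalso
        have h3 := σ.injective (h.trans key1.symm)
        exact haneb (mul_right_cancel h3)
    exact ⟨by rw [hP.2]; exact key2, by rw [hP.2]; exact key1⟩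
  have prop_x : ∀ v : G, P v → P (x * v) := by
    intro v hP
    constructor
    · have h2 : a * (x * v) = x * (b * v) := by
        rw [← mul_assoc, ← hxb, mul_assoc]
      rw [h2, hglob, hP.2, ← mul_assoc, hxb, mul_assoc, hglob]
    · have h2 : b * (x * v) = x * (a * v) := by
        rw [← mul_assoc, hbx, mul_assoc]
      rw [h2, hglob, hP.1, ← mul_assoc, ← hbx, mul_assoc, hglob]
  -- closure argument
  have hPb1 : σ b = b := by
    have hadjb : cayAdj G {x, a, b} 1 b := (adj_iff _ _).mpr (Or.inr (Or.inr (mul_one b).symm))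
    have hnadjb : ¬ cayAdj G {x, a, b} b 1 := by
      have := nadj_b 1; rwa [mul_one] at this
    have hpos := hpres 1 b hadjb
    have hneg := hpres' b 1 hnadjb
    rw [h1] at hpos hneg
    rcases single_eq 1 (σ b) hpos hneg with h | h
    · exfalso
      rw [mul_one] at h
      exact haneb (σ.injective (hfa.trans h.symm))
    · rwa [mul_one] at h
  have hM1 : σ (1 : G) = 1 ∧ P 1 := by
    refine ⟨h1, ?_, ?_⟩
    · rw [mul_one, h1, mul_one]; exact hfa
    · rw [mul_one, h1, mul_one]; exact hPb1
  let N : Submonoid G :=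
    { carrier := {g : G | ∀ h : G, (σ h = h ∧ P h) → (σ (g * h) = g * h ∧ P (g * h))}
      one_mem' := by intro h hh; simpa using hh
      mul_mem' := by
        intro p q hp hq h hh
        rw [mul_assoc]
        exact hp (q * h) (hq h hh) }
  have hgen_mem : ({x, a, b} : Set G) ⊆ (N : Set G) := by
    rintro s hs
    rcases hs with rfl | hs
    · intro h hh
      refine ⟨by rw [hglob, hh.1], prop_x h hh.2⟩
    rcases hs with rfl | hs
    · intro h hh
      refine ⟨by rw [hh.2.1, hh.1], prop_a h hh.2⟩
    rcases hs with rfl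
    intro h hh
    refine ⟨by rw [hh.2.2, hh.1], prop_b h hh.2⟩
  have hsub : Submonoid.closure ({x, a, b} : Set G) ≤ N := Submonoid.closure_le.mpr hgen_mem
  intro g
  have hgN : g ∈ N := hsub (hgen g)
  have := (hgN 1 hM1).1
  rwa [mul_one] at this


lemma st16_fix_prism (x a : G)
    (hxx : x * x = 1) (hx1 : x ≠ 1) (ha3 : a * (a * a) = 1) (ha1 : a ≠ 1)
    (hbaa : x * a * x = a * a)
    (hgen : ∀ g : G, g ∈ Submonoid.closure ({x, a, x * a * x} : Set G))
    (σ : Equiv.Perm G)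
    (hσ : ∀ u v, cayAdj G {x, a, x * a * x} (σ u) (σ v) ↔ cayAdj G {x, a, x * a * x} u v)
    (h1 : σ 1 = 1) (hfa : σ a = a) : ∀ g, σ g = g := by
  rw [hbaa] at hσ hgen
  have hX : ∀ u : G, x * (x * u) = u := fun u => by rw [← mul_assoc, hxx, one_mul]
  have hA : ∀ u : G, a * (a * (a * u)) = u := fun u => by
    rw [← mul_assoc, ← mul_assoc, mul_assoc a a a, ha3, one_mul]
  have hA2 : ∀ u : G, (a * a) * (a * u) = u := fun u => by rw [mul_assoc]; exact hA u
  have hA2' : ∀ u : G, a * ((a * a) * u) = u := fun u => by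
    rw [← mul_assoc, ha3, one_mul]
  have hxinv : x⁻¹ = x := inv_eq_of_mul_eq_one_right hxx
  have hainv : a⁻¹ = a * a := inv_eq_of_mul_eq_one_right ha3
  have hax : a ≠ x := by
    intro h
    apply hx1
    have h3 := ha3
    rw [h, ← mul_assoc, hxx, one_mul] at h3
    exact h3
  have haanea : a * a ≠ a := fun h => ha1 (mul_right_cancel (b := a) (by rw [h, one_mul]))
  have haane1 : a * a ≠ 1 := by
    intro h
    apply ha1
    have h3 := ha3
    rw [h, mul_one] at h3
    exact h3
  have hxnaa : x ≠ a * a := by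
    intro h
    apply hax
    rw [← hainv] at h
    rw [← hxinv, h, inv_inv]
  have haa4 : (a * a) * (a * a) = a := by
    rw [mul_assoc a a (a * a), ha3, mul_one]
  have hax2 : a * x = x * (a * a) := by
    rw [← hbaa, ← mul_assoc, ← mul_assoc, hxx, one_mul]
  have hxa : x * a = (a * a) * x := by
    rw [← hbaa, mul_assoc, hxx, mul_one]
  have adj_iff : ∀ u v : G, cayAdj G {x, a, a * a} u v ↔
      v = x * u ∨ v = a * u ∨ v = (a * a) * u := fun u v => st16_adj_iff x a (a * a) u v
  have hpres : ∀ u v : G, cayAdj G {x, a, a * a} u v → cayAdj G {x, a, a * a} (σ u) (σ v) :=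
    fun u v h => (hσ u v).mpr h
  -- non-adjacency facts
  have nA : ∀ u : G, ¬ cayAdj G {x, a, a * a} (a * u) (x * u) := by
    intro u h
    rcases (adj_iff _ _).mp h with h2 | h2 | h2
    · exact ha1 (right_eq_mul.mp (mul_left_cancel h2))
    · rw [← mul_assoc] at h2
      exact hxnaa (mul_right_cancel h2)
    · rw [hA2] at h2
      exact hx1 (right_eq_mul.mp h2.symm)
  have nB : ∀ u : G, ¬ cayAdj G {x, a, a * a} (x * u) (a * u) := by
    intro u h
    rcases (adj_iff _ _).mp h with h2 | h2 | h2
    · rw [hX] at h2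
      exact ha1 (right_eq_mul.mp h2.symm)
    · exact hx1 (right_eq_mul.mp (mul_left_cancel h2))
    · rw [mul_assoc] at h2
      have h3 := mul_left_cancel h2
      rw [← mul_assoc] at h3
      have h4 := right_eq_mul.mp h3
      have h5 := mul_eq_one_iff_eq_inv.mp h4
      rw [hxinv] at h5
      exact hax h5
  have nC : ∀ u : G, ¬ cayAdj G {x, a, a * a} (x * u) ((a * a) * u) := by
    intro u h
    rcases (adj_iff _ _).mp h with h2 | h2 | h2
    · rw [hX] at h2
      exact haane1 (right_eq_mul.mp h2.symm)
    · rw [mul_assoc] at h2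
      have h3 := mul_left_cancel h2
      exact hax (mul_right_cancel h3)
    · exact hx1 (right_eq_mul.mp (mul_left_cancel h2))
  have nD : ∀ u : G, ¬ cayAdj G {x, a, a * a} ((a * a) * u) (x * u) := by
    intro u h
    rcases (adj_iff _ _).mp h with h2 | h2 | h2
    · exact haane1 (right_eq_mul.mp (mul_left_cancel h2))
    · rw [hA2'] at h2
      exact hx1 (right_eq_mul.mp h2.symm)
    · rw [← mul_assoc, haa4] at h2
      exact hax (mul_right_cancel h2).symm
  -- σ fixes x and a*a
  have hSx : σ x = x ∨ σ x = a ∨ σ x = a * a := by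
    have h := hpres 1 x ((adj_iff 1 x).mpr (Or.inl (mul_one x).symm))
    rw [h1] at h
    have h2 := (adj_iff 1 (σ x)).mp h
    simpa only [mul_one] using h2
  have hSaa : σ (a * a) = x ∨ σ (a * a) = a ∨ σ (a * a) = a * a := by
    have h := hpres 1 (a * a) ((adj_iff 1 (a * a)).mpr (Or.inr (Or.inr (mul_one (a * a)).symm)))
    rw [h1] at h
    have h2 := (adj_iff 1 (σ (a * a))).mp h
    simpa only [mul_one] using h2
  have hadj_a_aa : cayAdj G {x, a, a * a} a (a * a) :=
    (adj_iff a (a * a)).mpr (Or.inr (Or.inl rfl))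
  have hfx : σ x = x := by
    rcases hSx with h | h | h
    · exact h
    · exfalso
      exact hax (σ.injective (hfa.trans h.symm))
    · exfalso
      -- then σ (a*a) = x, and adjacency a → a*a transports to a → x, contradiction
      have hfaa : σ (a * a) = x := by
        rcases hSaa with h' | h' | h'
        · exact h'
        · exact absurd (σ.injective (h'.trans hfa.symm)) haanea
        · exact absurd (σ.injective (h.trans h'.symm)) hxnaa
      have := hpres a (a * a) hadj_a_aa
      rw [hfa, hfaa] at this
      have h3 := nA 1
      rw [mul_one, mul_one] at h3
      exact h3 this
  have hfaa : σ (a * a) = a * a := by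
    rcases hSaa with h | h | h
    · exact absurd (σ.injective (h.trans hfx.symm)) hxnaa.symm
    · exact absurd (σ.injective (h.trans hfa.symm)) haanea
    · exact h
  set P : G → Prop := fun v =>
    σ (x * v) = x * σ v ∧ σ (a * v) = a * σ v ∧ σ ((a * a) * v) = (a * a) * σ v with hPdef
  have prop_a : ∀ v : G, P v → P (a * v) := by
    intro v hP
    refine ⟨?_, ?_, ?_⟩
    · -- the nontrivial component
      have hadj : cayAdj G {x, a, a * a} (a * v) (x * (a * v)) :=
        (adj_iff _ _).mpr (Or.inl rfl)
      have h := (adj_iff (σ (a * v)) (σ (x * (a * v)))).mp (hpres _ _ hadj)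
      rw [hP.2.1] at h
      rcases h with h | h | h
      · rw [hP.2.1]; exact h
      · exfalso
        have h2 : σ (x * (a * v)) = σ ((a * a) * v) := by
          rw [hP.2.2, mul_assoc]; exact h
        have h3 := σ.injective h2
        rw [← mul_assoc] at h3
        have h4 := mul_right_cancel h3
        have h5 := mul_right_cancel h4
        exact hax h5.symm
      · exfalso
        rw [hA2] at h
        have h3 := σ.injective h
        rw [← mul_assoc] at h3
        have h4 := right_eq_mul.mp h3.symm
        have h5 := mul_eq_one_iff_eq_inv.mp h4
        rw [hainv] at h5
        exact hxnaa h5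
    · rw [← mul_assoc, hP.2.2, hP.2.1, mul_assoc]
    · rw [hA2, hP.2.1, hA2]
  have prop_aa : ∀ v : G, P v → P ((a * a) * v) := by
    intro v hP
    have h := prop_a _ (prop_a v hP)
    rwa [← mul_assoc] at h
  have prop_x : ∀ v : G, P v → P (x * v) := by
    intro v hP
    refine ⟨?_, ?_, ?_⟩
    · rw [hX, hP.1, hX]
    · have e : a * (x * v) = x * ((a * a) * v) := by
        rw [← mul_assoc, hax2, mul_assoc]
      rw [e, (prop_aa v hP).1, hP.2.2, hP.1, ← mul_assoc, ← hax2, mul_assoc]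
    · have e : (a * a) * (x * v) = x * (a * v) := by
        rw [← mul_assoc, ← hxa, mul_assoc]
      rw [e, (prop_a v hP).1, hP.2.1, hP.1, ← mul_assoc, hxa, mul_assoc]
  have hM1 : σ (1 : G) = 1 ∧ P 1 := by
    refine ⟨h1, ?_, ?_, ?_⟩
    · rw [mul_one, h1, mul_one]; exact hfx
    · rw [mul_one, h1, mul_one]; exact hfa
    · rw [mul_one, h1, mul_one]; exact hfaa
  let N : Submonoid G :=
    { carrier := {g : G | ∀ h : G, (σ h = h ∧ P h) → (σ (g * h) = g * h ∧ P (g * h))}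
      one_mem' := by intro h hh; simpa using hh
      mul_mem' := by
        intro p q hp hq h hh
        rw [mul_assoc]
        exact hp (q * h) (hq h hh) }
  have hgen_mem : ({x, a, a * a} : Set G) ⊆ (N : Set G) := by
    rintro s hs
    rcases hs with rfl | hs
    · intro h hh
      exact ⟨by rw [hh.2.1, hh.1], prop_x h hh.2⟩
    rcases hs with rfl | hs
    · intro h hh
      exact ⟨by rw [hh.2.2.1, hh.1], prop_a h hh.2⟩
    rcases hs with rfl
    intro h hh
    exact ⟨by rw [hh.2.2.2, hh.1], prop_aa h hh.2⟩
  have hsub : Submonoid.closure ({x, a, a * a} : Set G) ≤ N := Submonoid.closure_le.mpr hgen_mem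
  intro g
  have hgN : g ∈ N := hsub (hgen g)
  have h := (hgN 1 hM1).1
  rwa [mul_one] at h


lemma st16_submonoid_gen (x a : G) (hxx : x * x = 1) (ha3 : a * (a * a) = 1)
    (hgen : Subgroup.closure ({x, a} : Set G) = ⊤) :
    ∀ g : G, g ∈ Submonoid.closure ({x, a, x * a * x} : Set G) := by
  intro g
  set M := Submonoid.closure ({x, a, x * a * x} : Set G) with hM
  have hxM : x ∈ M := Submonoid.subset_closure (by simp)
  have haM : a ∈ M := Submonoid.subset_closure (by simp)
  have hbM : x * a * x ∈ M := Submonoid.subset_closure (by simp)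
  have hb3 : (x * a * x) * ((x * a * x) * (x * a * x)) = 1 := by
    have hX : ∀ u : G, x * (x * u) = u := fun u => by rw [← mul_assoc, hxx, one_mul]
    simp only [mul_assoc, hX, hxx, mul_one]
    simp only [← mul_assoc, mul_assoc a a a, ha3, one_mul, hxx]
  have hinv : ∀ m ∈ M, m⁻¹ ∈ M := by
    intro m hm
    induction hm using Submonoid.closure_induction with
    | mem s hs =>
      rcases hs with rfl | hs
      · rw [inv_eq_of_mul_eq_one_right hxx]; exact hxM
      rcases hs with rfl | hs
      · rw [inv_eq_of_mul_eq_one_right ha3]; exact M.mul_mem haM haM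
      rcases hs with rfl
      rw [inv_eq_of_mul_eq_one_right hb3]
      exact M.mul_mem hbM hbM
    | one => rw [inv_one]; exact M.one_mem
    | mul p q hp hq ihp ihq => rw [mul_inv_rev]; exact M.mul_mem ihq ihp
  let H : Subgroup G := { toSubmonoid := M, inv_mem' := fun {m} hm => hinv m hm }
  have hle : Subgroup.closure ({x, a} : Set G) ≤ H := by
    rw [Subgroup.closure_le]
    rintro s hs
    rcases hs with rfl | hs
    · exact hxM
    rcases hs with rfl
    exact haM
  have : g ∈ H := hle (by rw [hgen]; exact Subgroup.mem_top g)
  exact this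

lemma st16_tau_adj (x a : G) (hxx : x * x = 1) (u v : G) :
    cayAdj G {x, a, x * a * x} (x * u * x) (x * v * x) ↔ cayAdj G {x, a, x * a * x} u v := by
  have hX : ∀ w : G, x * (x * w) = w := fun w => by rw [← mul_assoc, hxx, one_mul]
  rw [st16_adj_iff, st16_adj_iff]
  constructor
  · rintro (h | h | h)
    · refine Or.inl ?_
      have h2 := congrArg (fun w => x * w * x) h
      simp only [mul_assoc, hxx, hX, mul_one] at h2 ⊢
      exact h2
    · refine Or.inr (Or.inr ?_)
      have h2 := congrArg (fun w => x * w * x) h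
      simp only [mul_assoc, hxx, hX, mul_one] at h2 ⊢
      exact h2
    · refine Or.inr (Or.inl ?_)
      have h2 := congrArg (fun w => x * w * x) h
      simp only [mul_assoc, hxx, hX, mul_one] at h2 ⊢
      exact h2
  · rintro (h | h | h)
    · refine Or.inl ?_
      have h2 := congrArg (fun w => x * w * x) h
      simp only [mul_assoc, hxx, hX, mul_one] at h2 ⊢
      exact h2
    · refine Or.inr (Or.inr ?_)
      have h2 := congrArg (fun w => x * w * x) h
      simp only [mul_assoc, hxx, hX, mul_one] at h2 ⊢
      exact h2
    · refine Or.inr (Or.inl ?_)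
      have h2 := congrArg (fun w => x * w * x) h
      simp only [mul_assoc, hxx, hX, mul_one] at h2 ⊢
      exact h2

end St16Aux

lemma st16_z6 {G : Type*} [Group G] [Fintype G] (x y : G) (hx : orderOf x = 2)
    (hy : orderOf y = 3) (hgen : Subgroup.closure ({x, y} : Set G) = ⊤)
    (hcomm : Commute x y) : Nonempty (G ≃* Multiplicative (ZMod 6)) := by
  have hx2 : x ^ 2 = 1 := by rw [← hx]; exact pow_orderOf_eq_one x
  have hy3 : y ^ 3 = 1 := by rw [← hy]; exact pow_orderOf_eq_one y
  set g := x * y with hg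
  have hco : Nat.Coprime (orderOf x) (orderOf y) := by rw [hx, hy]; norm_num
  have horder : orderOf g = 6 := by
    rw [hg, Commute.orderOf_mul_eq_mul_orderOf_of_coprime hcomm hco, hx, hy]
  have hg3 : g ^ 3 = x := by
    rw [hg, hcomm.mul_pow, hy3, mul_one, show (3 : ℕ) = 2 + 1 from rfl, pow_succ, hx2, one_mul]
  have hg4 : g ^ 4 = y := by
    rw [hg, hcomm.mul_pow, show (4 : ℕ) = 2 * 2 from rfl, pow_mul, hx2, one_pow, one_mul,
      show (2 * 2 : ℕ) = 3 + 1 from rfl, pow_succ, hy3, one_mul]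
  have hmem : ∀ h : G, h ∈ Subgroup.zpowers g := by
    have hle : Subgroup.closure ({x, y} : Set G) ≤ Subgroup.zpowers g := by
      rw [Subgroup.closure_le]
      rintro s hs
      rcases hs with rfl | hs
      · exact hg3 ▸ Subgroup.npow_mem_zpowers g 3
      rcases hs with rfl
      · exact hg4 ▸ Subgroup.npow_mem_zpowers g 4
    intro h
    exact hle (by rw [hgen]; exact Subgroup.mem_top h)
  have hcard : Fintype.card G = 6 := by
    rw [← Nat.card_eq_fintype_card, ← orderOf_eq_card_of_forall_mem_zpowers hmem, horder]
  have hg6 : ((6 : ℕ) : ℤ) • Additive.ofMul g = 0 := by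
    rw [natCast_zsmul, ← ofMul_pow, ← horder, pow_orderOf_eq_one, ofMul_one]
  let ψ : ZMod 6 →+ Additive G := ZMod.lift 6 ⟨zmultiplesHom _ (Additive.ofMul g), by
    simpa only [zmultiplesHom_apply] using hg6⟩
  let φ : Multiplicative (ZMod 6) →* G := AddMonoidHom.toMultiplicativeLeft ψ
  have hφ : ∀ k : ℤ, φ (Multiplicative.ofAdd ((k : ℤ) : ZMod 6)) = g ^ k := by
    intro k
    show Additive.toMul (ψ ((k : ZMod 6))) = g ^ k
    have : ψ ((k : ZMod 6)) = k • Additive.ofMul g := by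
      show (ZMod.lift 6 _) ((k : ZMod 6)) = _
      rw [ZMod.lift_coe]
      simp [zmultiplesHom_apply]
    rw [this]
    simp [toMul_zsmul]
  have hsurj : Function.Surjective φ := by
    intro h
    rcases hmem h with ⟨k, hk⟩
    exact ⟨Multiplicative.ofAdd ((k : ℤ) : ZMod 6), by rw [hφ k]; exact hk⟩
  have hcard' : Fintype.card (Multiplicative (ZMod 6)) = Fintype.card G := by
    rw [hcard]
    simp
  have hbij : Function.Bijective φ :=
    (Fintype.bijective_iff_surjective_and_card φ).mpr ⟨hsurj, hcard'⟩
  exact ⟨(MulEquiv.ofBijective φ hbij).symm⟩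

/-- If `G` is generated by an involution `x` and an element `y` of order 3, and `G` is
isomorphic to neither `ℤ/6` nor `ℤ₃ ≀ ℤ₂`, then `Cay(G, {x, y, y^x})` has Cayley
index exactly 2. -/
theorem stmt_16 {G : Type*} [Group G] [Fintype G]
    (x y : G) (hx : orderOf x = 2) (hy : orderOf y = 3)
    (hgen : Subgroup.closure {x, y} = ⊤)
    (h6 : ¬ Nonempty (G ≃* Multiplicative (ZMod 6)))
    (hwr : ¬ Nonempty (G ≃* Z3wrZ2)) :
    (cayleyRR G {x, y, x⁻¹ * y * x}).index = 2 := by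
  classical
  -- basic facts
  have hxx : x * x = 1 := by
    have h := pow_orderOf_eq_one x
    rwa [hx, pow_two] at h
  have hx1 : x ≠ 1 := by
    intro h
    rw [h, orderOf_one] at hx
    exact absurd hx (by norm_num)
  have hy3 : y * (y * y) = 1 := by
    have h := pow_orderOf_eq_one y
    rw [hy, show (3 : ℕ) = 2 + 1 from rfl, pow_succ, pow_two] at h
    rwa [← mul_assoc]
  have hy1 : y ≠ 1 := by
    intro h
    rw [h, orderOf_one] at hy
    exact absurd hy (by norm_num)
  have hxinv : x⁻¹ = x := inv_eq_of_mul_eq_one_right hxx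
  have hyinv : y⁻¹ = y * y := inv_eq_of_mul_eq_one_right hy3
  have hyx : y ≠ x := by
    intro h
    apply hx1
    have h3 := hy3
    rw [h, ← mul_assoc, hxx, one_mul] at h3
    exact h3
  have hyy1 : y * y ≠ 1 := by
    intro h
    apply hy1
    have h3 := hy3
    rw [h, mul_one] at h3
    exact h3
  have hyyy : y * y ≠ y := fun h => hy1 (mul_right_cancel (b := y) (by rw [h, one_mul]))
  have hxnyy : x ≠ y * y := by
    intro h
    apply hyx
    rw [← hyinv] at h
    rw [← hxinv, h, inv_inv]
  rw [show ({x, y, x⁻¹ * y * x} : Set G) = {x, y, x * y * x} by rw [hxinv]]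
  -- exclude b = y using the Z/6 hypothesis
  have hbney : x * y * x ≠ y := by
    intro h
    apply h6
    apply st16_z6 x y hx hy hgen
    have h3 := congrArg (fun w => w * x) h
    rw [mul_assoc, mul_assoc, hxx, mul_one] at h3
    exact h3
  have hgenM : ∀ g : G, g ∈ Submonoid.closure ({x, y, x * y * x} : Set G) :=
    st16_submonoid_gen x y hxx hy3 hgen
  have adj_iff : ∀ u v : G, cayAdj G {x, y, x * y * x} u v ↔
      v = x * u ∨ v = y * u ∨ v = (x * y * x) * u := fun u v => st16_adj_iff x y (x * y * x) u v
  -- the stabilizer lemma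
  have hstab : ∀ σ : Equiv.Perm G,
      (∀ u v, cayAdj G {x, y, x * y * x} (σ u) (σ v) ↔ cayAdj G {x, y, x * y * x} u v) →
      σ 1 = 1 → (∀ g, σ g = g) ∨ (∀ g, σ g = x * g * x) := by
    intro σ hσ h1
    -- first: σ y = y or σ y = x*y*x
    have hσyS : σ y = x ∨ σ y = y ∨ σ y = x * y * x := by
      have hpos := (hσ 1 y).mpr ((adj_iff 1 y).mpr (Or.inr (Or.inl (mul_one y).symm)))
      rw [h1] at hpos
      have h2 := (adj_iff 1 (σ y)).mp hpos
      simpa only [mul_one] using h2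
    have hσy : σ y = y ∨ σ y = x * y * x := by
      rcases hσyS with hcon | h | h
      · exfalso
        by_cases hc : x * y * x = y * y
        · -- prism case: use adjacency y → y*y
          have hadjyyy : cayAdj G {x, y, x * y * x} y (y * y) :=
            (adj_iff y (y * y)).mpr (Or.inr (Or.inl rfl))
          have hσyyS : σ (y * y) = x ∨ σ (y * y) = y ∨ σ (y * y) = y * y := by
            have hpos := (hσ 1 (y * y)).mpr
              ((adj_iff 1 (y * y)).mpr (Or.inr (Or.inr (by rw [hc, mul_one]))))
            rw [h1] at hpos
            have h2 := (adj_iff 1 (σ (y * y))).mp hpos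
            rw [hc] at h2
            simpa only [mul_one] using h2
          have htr := (hσ y (y * y)).mpr hadjyyy
          rw [hcon] at htr
          rcases hσyyS with h2 | h2 | h2
          · rw [← hcon] at h2
            exact hyyy (σ.injective h2)
          · rw [h2] at htr
            rcases (adj_iff x y).mp htr with h3 | h3 | h3
            · rw [hxx] at h3; exact hy1 h3
            · exact hx1 (left_eq_mul.mp h3)
            · rw [hc] at h3
              have h4 := congrArg (fun w => y * w) h3
              rw [← mul_assoc, hy3, one_mul] at h4
              exact hxnyy h4.symm
          · rw [h2] at htr
            rcases (adj_iff x (y * y)).mp htr with h3 | h3 | h3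
            · rw [hxx] at h3; exact hyy1 h3
            · exact hyx (mul_left_cancel h3)
            · rw [hc] at h3
              exact hx1 (left_eq_mul.mp h3)
        · -- main case: y has no arc back to 1, but x does
          have hnadjy1 : ¬ cayAdj G {x, y, x * y * x} y 1 := by
            intro h
            rcases (adj_iff y 1).mp h with h2 | h2 | h2
            · have h3 := mul_eq_one_iff_inv_eq.mp h2.symm
              rw [hxinv] at h3
              exact hyx h3.symm
            · exact hyy1 h2.symm
            · have h3 := mul_eq_one_iff_eq_inv.mp h2.symm
              rw [hyinv] at h3
              exact hc h3
          apply hnadjy1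
          apply (hσ y 1).mp
          rw [h1, hcon]
          exact (adj_iff x 1).mpr (Or.inl hxx.symm)
      · exact Or.inl h
      · exact Or.inr h
    rcases hσy with hfa | hfa
    · left
      by_cases hc : x * y * x = y * y
      · exact st16_fix_prism x y hxx hx1 hy3 hy1 hc hgenM σ hσ h1 hfa
      · exact st16_fix_main x y hxx hx1 hy3 hy1 hbney hc hgenM σ hσ h1 hfa
    · right
      have hinvol : Function.Involutive (fun g : G => x * g * x) := by
        intro g
        show x * (x * g * x) * x = g
        rw [← mul_assoc, ← mul_assoc, hxx, one_mul, mul_assoc, hxx, mul_one]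
      set t0 : Equiv.Perm G := Function.Involutive.toPerm _ hinvol with ht0
      set σ2 : Equiv.Perm G := σ.trans t0 with hσ2def
      have hσ2 : ∀ u v, cayAdj G {x, y, x * y * x} (σ2 u) (σ2 v) ↔
          cayAdj G {x, y, x * y * x} u v := by
        intro u v
        have e : ∀ w, σ2 w = x * (σ w) * x := fun w => rfl
        rw [e u, e v, st16_tau_adj x y hxx]
        exact hσ u v
      have h21 : σ2 1 = 1 := by
        show x * (σ 1) * x = 1
        rw [h1, mul_one, hxx]
      have h2a : σ2 y = y := by
        show x * (σ y) * x = y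
        rw [hfa]
        exact hinvol y
      have hfix : ∀ g, σ2 g = g := by
        by_cases hc : x * y * x = y * y
        · exact st16_fix_prism x y hxx hx1 hy3 hy1 hc hgenM σ2 hσ2 h21 h2a
        · exact st16_fix_main x y hxx hx1 hy3 hy1 hbney hc hgenM σ2 hσ2 h21 h2a
      intro g
      have h3 : x * (σ g) * x = g := hfix g
      have h4 := congrArg (fun w => x * w * x) h3
      have h5 : x * (x * σ g * x) * x = σ g := by
        rw [← mul_assoc, ← mul_assoc, hxx, one_mul, mul_assoc, hxx, mul_one]
      rw [h5] at h4
      exact h4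
  -- now the index computation
  rw [Subgroup.index_eq_two_iff]
  have hinvol : Function.Involutive (fun g : G => x * g * x) := by
    intro g
    show x * (x * g * x) * x = g
    rw [← mul_assoc, ← mul_assoc, hxx, one_mul, mul_assoc, hxx, mul_one]
  set t0 : Equiv.Perm G := Function.Involutive.toPerm _ hinvol with ht0
  have ht0mem : t0 ∈ dAut (cayAdj G {x, y, x * y * x}) :=
    fun u v => st16_tau_adj x y hxx u v
  have htnotH : (⟨t0, ht0mem⟩ : dAut (cayAdj G {x, y, x * y * x})) ∉
      cayleyRR G {x, y, x * y * x} := by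
    intro hmem
    rw [cayleyRR, Subgroup.mem_subgroupOf] at hmem
    rcases hmem with ⟨g, hg⟩
    have e1 : (1 : G) * g⁻¹ = x * 1 * x := congrArg (fun e : Equiv.Perm G => e 1) hg
    rw [one_mul, mul_one, hxx] at e1
    have hg1 : g = 1 := by rwa [inv_eq_one] at e1
    have e2 : y * g⁻¹ = x * y * x := congrArg (fun e : Equiv.Perm G => e y) hg
    rw [hg1, inv_one, mul_one] at e2
    exact hbney e2.symm
  refine ⟨⟨t0, ht0mem⟩, ?_⟩
  intro σ
  have hrmem : (Equiv.mulRight ((σ : Equiv.Perm G) 1)⁻¹ : Equiv.Perm G) ∈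
      dAut (cayAdj G {x, y, x * y * x}) := by
    intro u v
    show cayAdj G _ (u * _) (v * _) ↔ _
    simp [cayAdj, mul_inv_rev, mul_assoc]
  set r : dAut (cayAdj G {x, y, x * y * x}) := ⟨_, hrmem⟩ with hr
  have hrH : r ∈ cayleyRR G {x, y, x * y * x} := by
    rw [cayleyRR, Subgroup.mem_subgroupOf]
    exact ⟨(σ : Equiv.Perm G) 1, rfl⟩
  have hr1 : ((r * σ : dAut (cayAdj G {x, y, x * y * x})) : Equiv.Perm G) 1 = 1 := by
    show ((σ : Equiv.Perm G) 1) * ((σ : Equiv.Perm G) 1)⁻¹ = 1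
    exact mul_inv_cancel _
  rcases hstab ((r * σ : dAut (cayAdj G {x, y, x * y * x})) : Equiv.Perm G)
      (fun u v => (r * σ).2 u v) hr1 with hid | htau
  · -- σ ∈ H
    have hrσ : r * σ = 1 := Subtype.ext (Equiv.ext hid)
    have hσr : σ = r⁻¹ := by
      have := mul_eq_one_iff_inv_eq.mp hrσ
      exact this.symm
    have hσH : σ ∈ cayleyRR G {x, y, x * y * x} := by
      rw [hσr]; exact inv_mem hrH
    refine Or.inr ⟨hσH, ?_⟩
    intro hcon
    exact htnotH (by
      have : (⟨t0, ht0mem⟩ : dAut (cayAdj G {x, y, x * y * x})) = σ⁻¹ * (σ * ⟨t0, ht0mem⟩) := by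
        group
      rw [this]
      exact mul_mem (inv_mem hσH) hcon)
  · -- σ * t ∈ H
    have hrσ : r * σ = ⟨t0, ht0mem⟩ := Subtype.ext (Equiv.ext fun g => htau g)
    have htt : (⟨t0, ht0mem⟩ : dAut (cayAdj G {x, y, x * y * x})) *
        ⟨t0, ht0mem⟩ = 1 := Subtype.ext (Equiv.ext fun g => hinvol g)
    have hσt : σ * ⟨t0, ht0mem⟩ = r⁻¹ := by
      have h2 : r * (σ * ⟨t0, ht0mem⟩) = 1 := by
        rw [← mul_assoc, hrσ, htt]
      exact (mul_eq_one_iff_inv_eq.mp h2).symm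
    refine Or.inl ⟨by rw [hσt]; exact inv_mem hrH, ?_⟩
    intro hcon
    apply htnotH
    rw [← hrσ]
    exact mul_mem hrH hcon
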